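/- Vanishing of the Taylor part in the twisted coproduct: in the BHZ tree Hopf algebra, suppose τ satisfies Δτ = Σ c^τ_{ση} σ⊗η where no η is a nonconstant polynomial X^k (k≠0). Then Δ(ₐI_k^𝔱(τ)) = (ₐI_k^𝔱 ⊗ Id)Δτ + (a term of the form Σ_{ℓ,b,c} (signs and binomials) X^c X^ℓ/ℓ! ⊗ X^{b−c} I_{k+ℓ}^𝔱(X^{a−b}τ)), and in particular the tensor component (ₐI_k^𝔱 ⊗ Id)Δτ contains no terms of the form σ ⊗ X^k with k ≠ 0. Concretely, the combinatorial identity Σ_{σ≤τ, a=c+c'+d+d'} (−1)^{|d+d'|} a!/(c!c'!d!d'!) X^c I_k^𝔱(X^d σ) ⊗ X^{c'}X^{d'}(τ/σ) = (ₐI_k^𝔱 ⊗ Id)Δτ holds, by the binomial cancellation Σ_{β=c'+d'} (−1)^{|d'|} β!/(c'!d'!) X^{c'}X^{d'} = (X−X)^β = δ_{β,0}. -/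

import Mathlib

open TensorProduct

variable {d : ℕ} {T : Type*} [CommRing T] [Algebra ℝ T]

/-- The length `|n| = Σ_i n_i` of a multi-index. -/
def mdeg {d : ℕ} (n : Fin d →₀ ℕ) : ℕ := n.sum fun _ j => j

/-- The factorial `n! = ∏_i (n_i)!` of a multi-index. -/
def mfact {d : ℕ} (n : Fin d →₀ ℕ) : ℕ := n.prod fun _ j => j.factorial

lemma mfact_eq {d : ℕ} (n : Fin d →₀ ℕ) : mfact n = ∏ i, (n i).factorial :=
  Finsupp.prod_fintype _ _ fun _ => Nat.factorial_zero

lemma mdeg_eq {d : ℕ} (n : Fin d →₀ ℕ) : mdeg n = ∑ i, n i :=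
  Finsupp.sum_fintype _ _ fun _ => rfl

lemma mdeg_add {d : ℕ} (x y : Fin d →₀ ℕ) : mdeg (x + y) = mdeg x + mdeg y := by
  simp [mdeg_eq, Finset.sum_add_distrib]

lemma mfact_pos {d : ℕ} (n : Fin d →₀ ℕ) : 0 < mfact n := by
  rw [mfact_eq]; exact Finset.prod_pos fun i _ => Nat.factorial_pos _

lemma nat_quad {n p q r : ℕ} (hp : p ≤ n) (hq : q ≤ n - p) (hr : r ≤ n - p - q) :
    n.factorial = n.choose p * (n - p).choose q * (n - p - q).choose r *
      (p.factorial * q.factorial * r.factorial * (n - p - q - r).factorial) := by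
  have h1 := Nat.choose_mul_factorial_mul_factorial hp
  have h2 := Nat.choose_mul_factorial_mul_factorial hq
  have h3 := Nat.choose_mul_factorial_mul_factorial hr
  rw [← h1, ← h2, ← h3]; ring

lemma nat_tri_symm {b p q : ℕ} (h : p + q ≤ b) :
    b.choose p * (b - p).choose q = b.choose q * (b - q).choose p := by
  have key : ∀ {p q : ℕ}, p + q ≤ b →
      b.choose p * (b - p).choose q * (p.factorial * q.factorial * (b - (p + q)).factorial)
        = b.factorial := by
    intro p q h
    have hp : p ≤ b := le_trans (Nat.le_add_right _ _) h
    have hq : q ≤ b - p := by omega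
    have h1 := Nat.choose_mul_factorial_mul_factorial hp
    have h2 := Nat.choose_mul_factorial_mul_factorial hq
    have : b - (p + q) = b - p - q := by omega
    rw [this, ← h1, ← h2]; ring
  have k1 := key h
  have k2 := key (show q + p ≤ b by omega)
  have hpos : 0 < p.factorial * q.factorial * (b - (p + q)).factorial :=
    Nat.mul_pos (Nat.mul_pos (Nat.factorial_pos _) (Nat.factorial_pos _)) (Nat.factorial_pos _)
  apply Nat.eq_of_mul_eq_mul_right hpos
  rw [k1]
  rw [show q + p = p + q from add_comm q p] at k2
  rw [← k2]; ring

lemma alt_nat (n : ℕ) :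
    ∑ j ∈ Finset.Iic n, (-1 : ℝ) ^ (n - j) * (n.choose j : ℝ) = if n = 0 then 1 else 0 := by
  have hr : Finset.Iic n = Finset.range (n + 1) := by ext x; simp [Nat.lt_succ_iff]
  have hz : ((∑ m ∈ Finset.range (n + 1), ((-1) ^ m * n.choose m : ℤ) : ℤ) : ℝ)
      = if n = 0 then 1 else 0 := by
    rw [Int.alternating_sum_range_choose]; split_ifs <;> simp
  push_cast at hz
  rw [hr]
  calc ∑ j ∈ Finset.range (n + 1), (-1 : ℝ) ^ (n - j) * (n.choose j : ℝ)
      = ∑ j ∈ Finset.range (n + 1), (-1 : ℝ) ^ n * ((-1) ^ j * (n.choose j : ℝ)) := by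
        refine Finset.sum_congr rfl fun j hj => ?_
        have hjn : j ≤ n := Nat.lt_succ_iff.mp (Finset.mem_range.mp hj)
        have key : (-1 : ℝ) ^ (n - j) = (-1) ^ n * (-1) ^ j := by
          have hnj : n + j = (n - j) + 2 * j := by omega
          have h1 : ((-1 : ℝ)) ^ (n + j) = (-1) ^ (n - j) := by
            rw [hnj, pow_add, pow_mul]; norm_num
          rw [← h1, pow_add]
        rw [key]; ring
    _ = (-1 : ℝ) ^ n * ∑ j ∈ Finset.range (n + 1), ((-1 : ℝ) ^ j * (n.choose j : ℝ)) := by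
        rw [Finset.mul_sum]
    _ = if n = 0 then 1 else 0 := by
        rw [hz]; split_ifs with h <;> simp [h]

def Cb {d : ℕ} (x y : Fin d →₀ ℕ) : ℕ := ∏ i, (x i).choose (y i)

lemma alt_finsupp {d : ℕ} (β : Fin d →₀ ℕ) :
    ∑ c ∈ Finset.Iic β, (-1 : ℝ) ^ (mdeg (β - c)) * (Cb β c : ℝ) =
      if β = 0 then 1 else 0 := by
  have hterm : ∀ c ∈ Finset.Iic β, (-1 : ℝ) ^ (mdeg (β - c)) * (Cb β c : ℝ)
      = ∏ i, ((-1 : ℝ) ^ (β i - c i) * ((β i).choose (c i) : ℝ)) := by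
    intro c _
    rw [Finset.prod_mul_distrib]
    congr 1
    · rw [mdeg_eq, ← Finset.prod_pow_eq_pow_sum]
      exact Finset.prod_congr rfl fun i _ => by rw [Finsupp.tsub_apply]
    · rw [Cb]; push_cast; rfl
  rw [Finset.sum_congr rfl hterm]
  have hbij : (∑ c ∈ Finset.Iic β, ∏ i, ((-1 : ℝ) ^ (β i - c i) * ((β i).choose (c i) : ℝ)))
      = ∑ p ∈ Fintype.piFinset (fun i => Finset.Iic (β i)),
          ∏ i, ((-1 : ℝ) ^ (β i - p i) * ((β i).choose (p i) : ℝ)) := by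
    refine Finset.sum_equiv (Finsupp.equivFunOnFinite (α := Fin d) (M := ℕ)) ?_ ?_
    · intro c
      simp only [Finset.mem_Iic, Fintype.mem_piFinset, Finsupp.le_def,
        Finsupp.equivFunOnFinite_apply]
    · intro c _; rfl
  have hps := Finset.prod_univ_sum (fun i : Fin d => Finset.Iic (β i))
    (fun i j => (-1 : ℝ) ^ (β i - j) * ((β i).choose j : ℝ))
  rw [hbij, ← hps]
  have hcomp : ∀ i : Fin d, ∑ j ∈ Finset.Iic (β i), (-1 : ℝ) ^ (β i - j) * ((β i).choose j : ℝ)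
      = if β i = 0 then 1 else 0 := fun i => alt_nat (β i)
  rw [Finset.prod_congr rfl fun i _ => hcomp i]
  by_cases hβ : β = 0
  · subst hβ; simp
  · rw [if_neg hβ]
    obtain ⟨i, hi⟩ : ∃ i, β i ≠ 0 := by
      by_contra h
      push_neg at h
      exact hβ (Finsupp.ext h)
    exact Finset.prod_eq_zero (Finset.mem_univ i) (by rw [if_neg hi])

lemma Cb_self {d : ℕ} (x : Fin d →₀ ℕ) : Cb x x = 1 := by
  simp [Cb, Nat.choose_self]

/-- the multinomial resummation identity from the proof of Theorem 4.5.
Given `Δτ = Σ_i σ_i ⊗ η_i`, the fourfold sum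
`Σ_{σ≤τ, a=c+c'+dd+d'} (−1)^{|dd+d'|} a!/(c!c'!dd!d'!) X^c I_k^𝔱(X^{dd}σ) ⊗ X^{c'}X^{d'}(τ/σ)`
collapses, by the binomial cancellation `(X−X)^β = δ_{β,0}`, to `(ₐI_k^𝔱 ⊗ Id)Δτ`, where
`ₐI_k^𝔱(σ) = Σ_{m≤a} binom(a,m)(−1)^{|a−m|} X^m I_k^𝔱(X^{a−m}σ)`. -/
theorem bhz_multinomial_resummation
    (Xp : (Fin d →₀ ℕ) → T) (hX0 : Xp 0 = 1)
    (hXmul : ∀ k ℓ : Fin d →₀ ℕ, Xp k * Xp ℓ = Xp (k + ℓ))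
    (I : T →ₗ[ℝ] T) (n : ℕ) (σ η : Fin n → T) (a : Fin d →₀ ℕ) :
    (∑ i : Fin n, ∑ c ∈ Finset.Iic a, ∑ c' ∈ Finset.Iic (a - c),
      ∑ dd ∈ Finset.Iic (a - c - c'),
        ((-1 : ℝ) ^ (mdeg (dd + (a - c - c' - dd))) *
          ((mfact a : ℝ) /
            ((mfact c : ℝ) * (mfact c' : ℝ) * (mfact dd : ℝ) *
              (mfact (a - c - c' - dd) : ℝ)))) •
          ((Xp c * I (Xp dd * σ i)) ⊗ₜ[ℝ]
            (Xp c' * Xp (a - c - c' - dd) * η i))) =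
    ∑ i : Fin n,
      (∑ m ∈ Finset.Iic a, ((∏ i', (a i').choose (m i') : ℕ) : ℝ) •
        (((-1 : ℝ) ^ (mdeg (a - m))) • (Xp m * I (Xp (a - m) * σ i)))) ⊗ₜ[ℝ] η i := by
  refine Finset.sum_congr rfl fun i _ => ?_
  rw [TensorProduct.sum_tmul]
  refine Finset.sum_congr rfl fun c hc => ?_
  have hca : c ≤ a := Finset.mem_Iic.mp hc
  rw [smul_smul, ← TensorProduct.smul_tmul']
  -- step 1 : rewrite each term of the double sum
  have step1 : ∀ c' ∈ Finset.Iic (a - c), ∀ dd ∈ Finset.Iic (a - c - c'),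
      (((-1 : ℝ) ^ (mdeg (dd + (a - c - c' - dd))) *
          ((mfact a : ℝ) /
            ((mfact c : ℝ) * (mfact c' : ℝ) * (mfact dd : ℝ) *
              (mfact (a - c - c' - dd) : ℝ)))) •
          ((Xp c * I (Xp dd * σ i)) ⊗ₜ[ℝ]
            (Xp c' * Xp (a - c - c' - dd) * η i)))
      = (((Cb a c : ℝ) * (Cb (a - c) dd : ℝ) * (-1 : ℝ) ^ (mdeg dd)) *
          ((-1 : ℝ) ^ (mdeg (a - c - dd - c')) * (Cb (a - c - dd) c' : ℝ))) •
          ((Xp c * I (Xp dd * σ i)) ⊗ₜ[ℝ] (Xp (a - c - dd) * η i)) := by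
    intro c' hc' dd hdd
    have hc'le : c' ≤ a - c := Finset.mem_Iic.mp hc'
    have hddle : dd ≤ a - c - c' := Finset.mem_Iic.mp hdd
    have hcomm : a - c - c' - dd = a - c - dd - c' := tsub_right_comm
    have hsum : dd + c' ≤ a - c :=
      (add_le_add hddle (le_refl c')).trans_eq (tsub_add_cancel_of_le hc'le)
    have hc'β : c' ≤ a - c - dd := le_tsub_of_add_le_left hsum
    have h2 : Xp c' * Xp (a - c - dd - c') * η i = Xp (a - c - dd) * η i := by
      rw [hXmul, add_tsub_cancel_of_le hc'β]
    have hD : ((mfact c : ℝ) * (mfact c' : ℝ) * (mfact dd : ℝ) *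
        (mfact (a - c - dd - c') : ℝ)) ≠ 0 := by
      have h1 : (0 : ℝ) < (mfact c : ℝ) := by exact_mod_cast mfact_pos c
      have h2 : (0 : ℝ) < (mfact c' : ℝ) := by exact_mod_cast mfact_pos c'
      have h3 : (0 : ℝ) < (mfact dd : ℝ) := by exact_mod_cast mfact_pos dd
      have h4 : (0 : ℝ) < (mfact (a - c - dd - c') : ℝ) := by
        exact_mod_cast mfact_pos (a - c - dd - c')
      positivity
    have hnat : mfact a = Cb a c * Cb (a - c) c' * Cb (a - c - c') dd *
        (mfact c * mfact c' * mfact dd * mfact (a - c - dd - c')) := by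
      simp only [mfact_eq, Cb, ← Finset.prod_mul_distrib]
      refine Finset.prod_congr rfl fun j _ => ?_
      simp only [Finsupp.tsub_apply]
      have hp : c j ≤ a j := Finsupp.le_def.mp hca j
      have hq : c' j ≤ a j - c j := by
        have := Finsupp.le_def.mp hc'le j
        simpa [Finsupp.tsub_apply] using this
      have hrr : dd j ≤ a j - c j - c' j := by
        have := Finsupp.le_def.mp hddle j
        simpa [Finsupp.tsub_apply] using this
      have hs : a j - c j - dd j - c' j = a j - c j - c' j - dd j := by omega
      rw [hs]
      exact nat_quad hp hq hrr
    have hdiveq : (mfact a : ℝ) /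
        ((mfact c : ℝ) * (mfact c' : ℝ) * (mfact dd : ℝ) * (mfact (a - c - dd - c') : ℝ))
        = (Cb a c : ℝ) * (Cb (a - c) c' : ℝ) * (Cb (a - c - c') dd : ℝ) := by
      rw [div_eq_iff hD]
      exact_mod_cast hnat
    have htri : (Cb (a - c) c' : ℝ) * (Cb (a - c - c') dd : ℝ)
        = (Cb (a - c) dd : ℝ) * (Cb (a - c - dd) c' : ℝ) := by
      have hn : Cb (a - c) c' * Cb (a - c - c') dd = Cb (a - c) dd * Cb (a - c - dd) c' := by
        simp only [Cb, ← Finset.prod_mul_distrib]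
        refine Finset.prod_congr rfl fun j _ => ?_
        simp only [Finsupp.tsub_apply]
        refine nat_tri_symm ?_
        have h1 := Finsupp.le_def.mp hddle j
        have h2 := Finsupp.le_def.mp hc'le j
        simp only [Finsupp.tsub_apply] at h1 h2
        omega
      exact_mod_cast hn
    rw [hcomm, mdeg_add, pow_add, h2, hdiveq]
    congr 1
    linear_combination ((-1 : ℝ) ^ (mdeg dd) * (-1 : ℝ) ^ (mdeg (a - c - dd - c')) *
      (Cb a c : ℝ)) * htri
  rw [Finset.sum_congr rfl fun c' hc' => Finset.sum_congr rfl fun dd hdd =>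
    step1 c' hc' dd hdd]
  -- step 2 : swap the two sums
  rw [Finset.sum_comm' (t' := Finset.Iic (a - c)) (s' := fun dd => Finset.Iic (a - c - dd))
    (by
      intro x y
      simp only [Finset.mem_Iic]
      constructor
      · rintro ⟨h1, h2⟩
        have hsum : y + x ≤ a - c :=
          (add_le_add h2 (le_refl x)).trans_eq (tsub_add_cancel_of_le h1)
        exact ⟨le_tsub_of_add_le_left hsum, le_trans h2 tsub_le_self⟩
      · rintro ⟨h1, h2⟩
        have hsum : x + y ≤ a - c :=
          (add_le_add h1 (le_refl y)).trans_eq (tsub_add_cancel_of_le h2)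
        exact ⟨le_trans h1 tsub_le_self, le_tsub_of_add_le_left hsum⟩)]
  -- step 3 : collapse the inner sum via the alternating identity
  have step3 : ∀ dd ∈ Finset.Iic (a - c),
      (∑ c' ∈ Finset.Iic (a - c - dd),
        (((Cb a c : ℝ) * (Cb (a - c) dd : ℝ) * (-1 : ℝ) ^ (mdeg dd)) *
          ((-1 : ℝ) ^ (mdeg (a - c - dd - c')) * (Cb (a - c - dd) c' : ℝ))) •
          ((Xp c * I (Xp dd * σ i)) ⊗ₜ[ℝ] (Xp (a - c - dd) * η i)))
      = if dd = a - c then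
          (((Cb a c : ℝ) * (Cb (a - c) dd : ℝ) * (-1 : ℝ) ^ (mdeg dd)) •
            ((Xp c * I (Xp dd * σ i)) ⊗ₜ[ℝ] (Xp (a - c - dd) * η i)))
        else 0 := by
    intro dd hdd
    have hddle : dd ≤ a - c := Finset.mem_Iic.mp hdd
    rw [← Finset.sum_smul, ← Finset.mul_sum, alt_finsupp (a - c - dd)]
    by_cases hP : dd = a - c
    · subst hP
      rw [if_pos (by simp), if_pos rfl, mul_one]
    · have hne : a - c - dd ≠ 0 := by
        intro h0
        exact hP (le_antisymm hddle (tsub_eq_zero_iff_le.mp h0))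
      rw [if_neg hne, if_neg hP, mul_zero, zero_smul]
  rw [Finset.sum_congr rfl step3, Finset.sum_ite_eq' (Finset.Iic (a - c)) (a - c)]
  rw [if_pos (Finset.mem_Iic.mpr le_rfl), tsub_self, hX0, one_mul, Cb_self]
  congr 1
  · push_cast [Cb]
    ring
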